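/- Let F be a finite rooted transitive frame with frame formula φ, and let G = ⟨U,S⟩ be any transitive frame with u ∈ U. Then φ is satisfiable in G at u iff the subframe of G generated by u is reducible to F. -/

import Mathlib

/-- A Kripke frame: a set of worlds with a binary relation. -/
structure Frame where
  World : Type
  rel : World → World → Prop

/-- `f` is a reduction (surjective p-morphism) of `F` to `G`. -/
def Reduction (F G : Frame) (f : F.World → G.World) : Prop :=
  Function.Surjective f ∧
  (∀ w u, F.rel w u → G.rel (f w) (f u)) ∧
  (∀ w v, G.rel (f w) v → ∃ u, F.rel w u ∧ f u = v)

/-- `F` is reducible to `G`. -/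
def Reducible (F G : Frame) : Prop := ∃ f, Reduction F G f

/-- The subframe of `F` generated by the point `w`. -/
def Frame.genSub (F : Frame) (w : F.World) : Frame :=
  ⟨{v // Relation.ReflTransGen F.rel w v}, fun a b => F.rel a.1 b.1⟩

/-- Modal formulas over countably many propositional variables. -/
inductive Formula where
  | var : ℕ → Formula
  | bot : Formula
  | imp : Formula → Formula → Formula
  | box : Formula → Formula
deriving DecidableEq

namespace Formula

def neg (a : Formula) : Formula := .imp a .bot
def top : Formula := .imp .bot .bot
def and (a b : Formula) : Formula := neg (.imp a (neg b))
def or (a b : Formula) : Formula := .imp (neg a) b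
def dia (a : Formula) : Formula := neg (.box (neg a))

/-- Finite conjunction of a list of formulas. -/
def bigConj (l : List Formula) : Formula := l.foldr and top

/-- Finite disjunction of a list of formulas. -/
def bigDisj (l : List Formula) : Formula := l.foldr or .bot

end Formula

/-- Kripke satisfaction of a formula at a world of `F` under valuation `V`. -/
def Sat (F : Frame) (V : ℕ → F.World → Prop) : F.World → Formula → Prop
  | w, .var n => V n w
  | _, .bot => False
  | w, .imp a b => Sat F V w a → Sat F V w b
  | w, .box a => ∀ u, F.rel w u → Sat F V u a

/-- `φ` is valid at the point `w` of `F` (true under all valuations). -/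
def SatAll (F : Frame) (w : F.World) (φ : Formula) : Prop := ∀ V, Sat F V w φ

/-- `φ` is valid in the frame `F`. -/
def Valid (F : Frame) (φ : Formula) : Prop := ∀ V w, Sat F V w φ

open Classical in
/-- The frame formula (Jankov–Fine formula) of a finite rooted transitive frame
whose points are enumerated `w_0, …, w_n` (with `w_0` a root), expressed in
terms of the induced relation `R` on indices: the conjunction of `p_0`,
`□(p_0 ∨ ⋯ ∨ p_n)`, the clauses `(p_i → ¬p_j) ∧ □(p_i → ¬p_j)` for `i ≠ j`,
`(p_i → ◇p_j) ∧ □(p_i → ◇p_j)` when `R i j`, and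
`(p_i → ¬◇p_j) ∧ □(p_i → ¬◇p_j)` when not `R i j`. -/
noncomputable def frameFormula (n : ℕ) (R : Fin (n + 1) → Fin (n + 1) → Prop) : Formula :=
  .and (.var 0)
    (.and (.box (Formula.bigDisj ((List.finRange (n + 1)).map fun i => Formula.var i)))
      (Formula.bigConj ((List.finRange (n + 1)).flatMap fun (i : Fin (n + 1)) =>
        (List.finRange (n + 1)).flatMap fun (j : Fin (n + 1)) =>
          (if i = j then []
           else [Formula.and (.imp (.var i) (Formula.neg (.var j)))
                  (.box (.imp (.var i) (Formula.neg (.var j))))]) ++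
          (if R i j then
            [Formula.and (.imp (.var i) (Formula.dia (.var j)))
              (.box (.imp (.var i) (Formula.dia (.var j))))]
           else
            [Formula.and (.imp (.var i) (Formula.neg (Formula.dia (.var j))))
              (.box (.imp (.var i) (Formula.neg (Formula.dia (.var j)))))]))))

section FrameFormulaAux

variable {F : Frame} {V : ℕ → F.World → Prop} {w : F.World}

lemma sat_neg {a : Formula} : Sat F V w (Formula.neg a) ↔ ¬ Sat F V w a := Iff.rfl

lemma sat_and {a b : Formula} : Sat F V w (Formula.and a b) ↔ Sat F V w a ∧ Sat F V w b := by
  simp only [Formula.and, Formula.neg, Sat]; tauto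

lemma sat_dia {a : Formula} : Sat F V w (Formula.dia a) ↔ ∃ v, F.rel w v ∧ Sat F V v a := by
  simp only [Formula.dia, Formula.neg, Sat]
  constructor
  · intro h
    by_contra hc
    push_neg at hc
    exact h fun v hv ha => hc v hv ha
  · rintro ⟨v, hv, ha⟩ h
    exact h v hv ha

lemma sat_bigConj {l : List Formula} : Sat F V w (Formula.bigConj l) ↔ ∀ a ∈ l, Sat F V w a := by
  induction l with
  | nil => simp [Formula.bigConj, Formula.top, Sat]
  | cons a l ih =>
    simp only [Formula.bigConj, List.foldr] at ih ⊢
    rw [sat_and, ih]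
    simp

lemma sat_bigDisj {l : List Formula} : Sat F V w (Formula.bigDisj l) ↔ ∃ a ∈ l, Sat F V w a := by
  induction l with
  | nil => simp [Formula.bigDisj, Sat]
  | cons a l ih =>
    simp only [Formula.bigDisj, List.foldr] at ih ⊢
    simp only [Formula.or, Formula.neg, Sat, ih]
    constructor
    · intro h
      by_cases ha : Sat F V w a
      · exact ⟨a, by simp, ha⟩
      · obtain ⟨b, hb, hsb⟩ := h fun h' => absurd h' ha
        exact ⟨b, by simp [hb], hsb⟩
    · rintro ⟨b, hb, hsb⟩ hna
      rcases List.mem_cons.mp hb with rfl | hb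
      · exact absurd hsb hna
      · exact ⟨b, hb, hsb⟩

lemma reach_cases {G : Frame} (htrG : ∀ a b c, G.rel a b → G.rel b c → G.rel a c)
    {u w : G.World} (h : Relation.ReflTransGen G.rel u w) : w = u ∨ G.rel u w := by
  induction h with
  | refl => exact Or.inl rfl
  | tail h1 h2 ih =>
    rcases ih with rfl | ih
    · exact Or.inr h2
    · exact Or.inr (htrG _ _ _ ih h2)

open Classical in
lemma swap_rel {F : Frame} (htr : ∀ a b c, F.rel a b → F.rel b c → F.rel a c)
    (a b : F.World) (hab : F.rel a b) (hba : F.rel b a) :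
    ∀ x y, F.rel x y →
      F.rel (if x = a then b else if x = b then a else x)
            (if y = a then b else if y = b then a else y) := by
  intro x y hxy
  have haa : F.rel a a := htr _ _ _ hab hba
  have hbb : F.rel b b := htr _ _ _ hba hab
  split_ifs <;> subst_vars <;>
    first
      | assumption
      | exact htr _ _ _ hba hxy
      | exact htr _ _ _ hab hxy
      | exact htr _ _ _ hxy hab
      | exact htr _ _ _ hxy hba

end FrameFormulaAux
/-- The frame formula of a finite rooted transitive frame `F` is satisfiable
at a point `u` of a transitive frame `G` iff the subframe of `G` generated by
`u` is reducible to `F`. -/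
theorem frameFormula_sat_iff_reducible (n : ℕ) (F : Frame)
    (htrF : ∀ a b c, F.rel a b → F.rel b c → F.rel a c)
    (e : Fin (n + 1) → F.World) (hbij : Function.Bijective e)
    (hroot : ∀ u : F.World, u = e 0 ∨ F.rel (e 0) u)
    (G : Frame) (htrG : ∀ a b c, G.rel a b → G.rel b c → G.rel a c) (u : G.World) :
    (∃ V, Sat G V u (frameFormula n (fun i j => F.rel (e i) (e j)))) ↔
      Reducible (G.genSub u) F := by
  classical
  constructor
  · rintro ⟨V, hV⟩
    simp only [frameFormula] at hV
    rw [sat_and] at hV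
    obtain ⟨h0, hrest⟩ := hV
    rw [sat_and] at hrest
    obtain ⟨hbox, hconj⟩ := hrest
    rw [sat_bigConj] at hconj
    have h0' : V 0 u := h0
    -- coverage
    have hcover : ∀ w, G.rel u w → ∃ i : Fin (n + 1), V i w := by
      intro w hw
      have := hbox w hw
      rw [sat_bigDisj] at this
      obtain ⟨a, ha, hsa⟩ := this
      have ha' : ∃ i : Fin (n + 1), Formula.var i = a := by
        simp only [List.mem_map] at ha
        obtain ⟨k, hk, rfl⟩ := ha
        obtain ⟨i, rfl⟩ : ∃ i : Fin (n + 1), k = (i : ℕ) := by simpa using hk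
        exact ⟨i, rfl⟩
      obtain ⟨i, rfl⟩ := ha'
      exact ⟨i, hsa⟩
    -- clause access
    have hmem : ∀ (i j : Fin (n + 1)) (c : Formula),
        c ∈ ((if i = j then ([] : List Formula)
           else [Formula.and (.imp (.var i) (Formula.neg (.var j)))
                  (.box (.imp (.var i) (Formula.neg (.var j))))]) ++
          (if F.rel (e i) (e j) then
            [Formula.and (.imp (.var i) (Formula.dia (.var j)))
              (.box (.imp (.var i) (Formula.dia (.var j))))]
           else
            [Formula.and (.imp (.var i) (Formula.neg (Formula.dia (.var j))))
              (.box (.imp (.var i) (Formula.neg (Formula.dia (.var j)))))])) →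
          Sat G V u c := by
      intro i j c hc
      apply hconj
      refine List.mem_flatMap.mpr ⟨i, List.mem_finRange i, ?_⟩
      refine List.mem_flatMap.mpr ⟨j, List.mem_finRange j, ?_⟩
      convert hc using 3
    have hdisj : ∀ i j : Fin (n + 1), i ≠ j → ∀ w, w = u ∨ G.rel u w → V i w → ¬ V j w := by
      intro i j hij w hw hi hj
      have hc := hmem i j (Formula.and (.imp (.var i) (Formula.neg (.var j)))
        (.box (.imp (.var i) (Formula.neg (.var j))))) (by simp [hij])
      rw [sat_and] at hc
      rcases hw with rfl | hw
      · exact hc.1 hi hj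
      · exact hc.2 w hw hi hj
    have hdia : ∀ i j : Fin (n + 1), F.rel (e i) (e j) → ∀ w, w = u ∨ G.rel u w →
        V i w → ∃ v, G.rel w v ∧ V j v := by
      intro i j hij w hw hi
      have hc := hmem i j (Formula.and (.imp (.var i) (Formula.dia (.var j)))
        (.box (.imp (.var i) (Formula.dia (.var j))))) (by simp [hij])
      rw [sat_and] at hc
      rcases hw with rfl | hw
      · exact sat_dia.mp (hc.1 hi)
      · exact sat_dia.mp (hc.2 w hw hi)
    have hndia : ∀ i j : Fin (n + 1), ¬ F.rel (e i) (e j) → ∀ w, w = u ∨ G.rel u w →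
        V i w → ¬ ∃ v, G.rel w v ∧ V j v := by
      intro i j hij w hw hi hd
      have hc := hmem i j (Formula.and (.imp (.var i) (Formula.neg (Formula.dia (.var j))))
        (.box (.imp (.var i) (Formula.neg (Formula.dia (.var j)))))) (by simp [hij])
      rw [sat_and] at hc
      rcases hw with rfl | hw
      · exact hc.1 hi (sat_dia.mpr hd)
      · exact hc.2 w hw hi (sat_dia.mpr hd)
    have hreach : ∀ w : (G.genSub u).World, w.1 = u ∨ G.rel u w.1 :=
      fun w => reach_cases htrG w.2
    have hex : ∀ w : (G.genSub u).World, ∃ i : Fin (n + 1), V i w.1 := by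
      intro w
      rcases hreach w with h | h
      · exact ⟨0, by rw [h]; simpa using h0'⟩
      · exact hcover w.1 h
    set idx : (G.genSub u).World → Fin (n + 1) := fun w => Classical.choose (hex w) with hidxdef
    have hidx : ∀ w, V (idx w) w.1 := fun w => Classical.choose_spec (hex w)
    have huniq : ∀ (w : (G.genSub u).World) (j : Fin (n + 1)), V j w.1 → idx w = j := by
      intro w j hj
      by_contra hne
      exact hdisj _ _ hne w.1 (hreach w) (hidx w) hj
    set f : (G.genSub u).World → F.World := fun w => e (idx w) with hfdef
    have hroot0 : idx ⟨u, Relation.ReflTransGen.refl⟩ = 0 :=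
      huniq _ 0 (by simpa using h0')
    have hback : ∀ (w : (G.genSub u).World) v, F.rel (f w) v →
        ∃ x, (G.genSub u).rel w x ∧ f x = v := by
      intro w v hv
      obtain ⟨j, rfl⟩ := hbij.2 v
      obtain ⟨v', hv', hVj⟩ := hdia (idx w) j hv w.1 (hreach w) (hidx w)
      have hv'' : Relation.ReflTransGen G.rel u v' := by
        rcases hreach w with h | h
        · exact Relation.ReflTransGen.single (by rwa [h] at hv')
        · exact Relation.ReflTransGen.single (htrG _ _ _ h hv')
      refine ⟨⟨v', hv''⟩, hv', ?_⟩
      show e (idx ⟨v', hv''⟩) = e j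
      rw [huniq ⟨v', hv''⟩ j hVj]
    refine ⟨f, ?_, ?_, hback⟩
    · intro v
      obtain ⟨j, rfl⟩ := hbij.2 v
      rcases hroot (e j) with h | h
      · exact ⟨⟨u, Relation.ReflTransGen.refl⟩, by
          show e _ = e j; rw [hroot0, ← h]⟩
      · obtain ⟨x, -, hx⟩ := hback ⟨u, Relation.ReflTransGen.refl⟩ (e j)
          (by show F.rel (e _) (e j); rw [hroot0]; exact h)
        exact ⟨x, hx⟩
    · intro w v hwv
      show F.rel (e (idx w)) (e (idx v))
      by_contra hc
      exact hndia (idx w) (idx v) hc w.1 (hreach w) (hidx w) ⟨v.1, hwv, hidx v⟩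
  · rintro ⟨f, hf⟩
    -- first obtain a reduction sending the root to `e 0`
    obtain ⟨g, hg, hg0⟩ : ∃ g, Reduction (G.genSub u) F g ∧
        g ⟨u, Relation.ReflTransGen.refl⟩ = e 0 := by
      set r : F.World := f ⟨u, Relation.ReflTransGen.refl⟩ with hr
      by_cases hru : r = e 0
      · exact ⟨f, hf, hru⟩
      · have h1 : F.rel (e 0) r := by
          rcases hroot r with h | h
          · exact absurd h hru
          · exact h
        have h2 : F.rel r (e 0) := by
          obtain ⟨x, hx⟩ := hf.1 (e 0)
          rcases reach_cases htrG x.2 with h | h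
          · exfalso
            apply hru
            rw [hr, ← hx]
            congr 1
            exact Subtype.ext h.symm
          · have := hf.2.1 ⟨u, Relation.ReflTransGen.refl⟩ x h
            rwa [hx] at this
        set σ : F.World → F.World :=
          fun x => if x = r then e 0 else if x = e 0 then r else x with hσ
        have hσinv : Function.Involutive σ := by
          intro x
          simp only [hσ]
          split_ifs <;> simp_all
        have hσrel : ∀ x y, F.rel x y → F.rel (σ x) (σ y) :=
          fun x y hxy => swap_rel htrF r (e 0) h2 h1 x y hxy
        refine ⟨σ ∘ f, ⟨hσinv.surjective.comp hf.1, fun w v h => hσrel _ _ (hf.2.1 w v h),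
          ?_⟩, by show σ (f ⟨u, Relation.ReflTransGen.refl⟩) = e 0; exact if_pos hr.symm⟩
        intro w v hv
        have hv' : F.rel (f w) (σ v) := by
          have := hσrel _ _ hv
          simp only [Function.comp_apply] at this
          rwa [hσinv (f w)] at this
        obtain ⟨x, hx1, hx2⟩ := hf.2.2 w (σ v) hv'
        exact ⟨x, hx1, by simp [Function.comp, hx2, hσinv v]⟩
    clear hf f
    -- the valuation
    refine ⟨fun k w => ∃ (h : Relation.ReflTransGen G.rel u w) (hk : k < n + 1),
      g ⟨w, h⟩ = e ⟨k, hk⟩, ?_⟩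
    set V : ℕ → G.World → Prop := fun k w => ∃ (h : Relation.ReflTransGen G.rel u w)
      (hk : k < n + 1), g ⟨w, h⟩ = e ⟨k, hk⟩ with hVdef
    have hVg : ∀ (w : G.World) (hw : Relation.ReflTransGen G.rel u w) (i : Fin (n + 1)),
        V i w ↔ g ⟨w, hw⟩ = e i := by
      intro w hw i
      constructor
      · rintro ⟨h, hk, heq⟩
        exact heq
      · intro h
        exact ⟨hw, i.isLt, h⟩
    simp only [frameFormula]
    rw [sat_and]
    constructor
    · show V 0 u
      exact (hVg u Relation.ReflTransGen.refl 0).mpr hg0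
    rw [sat_and]
    constructor
    · intro w hw
      rw [sat_bigDisj]
      have hw' : Relation.ReflTransGen G.rel u w := Relation.ReflTransGen.single hw
      obtain ⟨i, hi⟩ := hbij.2 (g ⟨w, hw'⟩)
      refine ⟨Formula.var i, by simp, ?_⟩
      show V i w
      exact (hVg w hw' i).mpr hi.symm
    rw [sat_bigConj]
    intro a ha
    simp only [List.mem_flatMap, List.mem_finRange, true_and] at ha
    obtain ⟨i, j, ha⟩ := ha
    have key1 : i ≠ j → ∀ (w : G.World) (hw : Relation.ReflTransGen G.rel u w),
        Sat G V w (.imp (.var i) (Formula.neg (.var j))) := by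
      intro hij w hw hVi hVj
      exact hij (hbij.1 (((hVg w hw i).mp hVi).symm.trans ((hVg w hw j).mp hVj)))
    have key2 : F.rel (e i) (e j) → ∀ (w : G.World) (hw : Relation.ReflTransGen G.rel u w),
        Sat G V w (.imp (.var i) (Formula.dia (.var j))) := by
      intro hij w hw hVi
      have : F.rel (g ⟨w, hw⟩) (e j) := by rw [(hVg w hw i).mp hVi]; exact hij
      obtain ⟨x, hx1, hx2⟩ := hg.2.2 ⟨w, hw⟩ (e j) this
      exact sat_dia.mpr ⟨x.1, hx1, (hVg x.1 x.2 j).mpr hx2⟩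
    have key3 : ¬ F.rel (e i) (e j) → ∀ (w : G.World) (hw : Relation.ReflTransGen G.rel u w),
        Sat G V w (.imp (.var i) (Formula.neg (Formula.dia (.var j)))) := by
      intro hij w hw hVi hd
      obtain ⟨v, hv, hVj⟩ := sat_dia.mp hd
      obtain ⟨hv', hk, heq⟩ := hVj
      have := hg.2.1 ⟨w, hw⟩ ⟨v, hv'⟩ hv
      rw [(hVg w hw i).mp hVi, heq] at this
      exact hij this
    rcases List.mem_append.mp ha with h | h
    · by_cases hij : i = j
      · simp [hij] at h
      · simp only [hij, if_false, List.mem_singleton] at h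
        subst h
        exact sat_and.mpr ⟨key1 hij u Relation.ReflTransGen.refl,
          fun w hw => key1 hij w (Relation.ReflTransGen.single hw)⟩
    · by_cases hij : F.rel (e i) (e j)
      · simp only [hij, if_true, List.mem_singleton] at h
        subst h
        exact sat_and.mpr ⟨key2 hij u Relation.ReflTransGen.refl,
          fun w hw => key2 hij w (Relation.ReflTransGen.single hw)⟩
      · simp only [hij, if_false, List.mem_singleton] at h
        subst h
        exact sat_and.mpr ⟨key3 hij u Relation.ReflTransGen.refl,
          fun w hw => key3 hij w (Relation.ReflTransGen.single hw)⟩
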